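/- arXiv:1908.06940 — 2 statements merged into one kernel-verified Lean document; each statement's English description precedes it below -/
import Mathlib

section
/- Let n = k·s with integers k ≥ 2 and s ≥ 1, let z : {1,…,n} → {1,…,k} be a block assignment whose every fiber has exactly s elements, and let p, q be real numbers. Let M be the n×n real symmetric matrix with M_{ii} = 0 for all i, M_{ij} = p for i ≠ j with z(i) = z(j), and M_{ij} = q for z(i) ≠ z(j). Then the characteristic polynomial of M equals (X − (qn + (p−q)s − p)) · (X − ((p−q)s − p))^{k−1} · (X + p)^{n−k}; equivalently, the eigenvalues of M are qn + (p−q)s − p with multiplicity 1, (p−q)s − p with multiplicity k−1, and −p with multiplicity n−k. -/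
open Polynomial Matrix

lemma chip_det_aux {F : Type*} [Field F] (n k s : ℕ) (hk : 2 ≤ k) (hs : 1 ≤ s)
    (hn : n = k * s) (z : Fin n → Fin k)
    (hz : ∀ a : Fin k, (Finset.univ.filter fun i => z i = a).card = s)
    (x p q : F) (hα : x + p ≠ 0) (hc : x + p - (p - q) * (s : F) ≠ 0) :
    (Matrix.of fun i j : Fin n => if i = j then x else if z i = z j then -p else -q).det
      = (x - (q * n + (p - q) * s - p)) * (x - ((p - q) * s - p)) ^ (k - 1)
        * (x + p) ^ (n - k) := by
  classical
  have hk1 : 1 ≤ k := le_trans one_le_two hk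
  have hkn : k ≤ n := by rw [hn]; exact Nat.le_mul_of_pos_right k hs
  set α := x + p with hαdef
  set c := x + p - (p - q) * (s : F) with hcdef
  set U0 : Matrix (Fin n) (Fin k) F := Matrix.of fun i a => if z i = a then 1 else 0 with hU0
  set Bz : Matrix (Fin n) (Fin n) F := U0 * U0ᵀ with hBzdef
  have hBz : ∀ i j, Bz i j = if z i = z j then 1 else 0 := by
    intro i j
    rw [hBzdef]
    simp only [Matrix.mul_apply, Matrix.transpose_apply, hU0, Matrix.of_apply]
    rw [Finset.sum_eq_single (z i)]
    · simp [eq_comm]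
    · intro b _ hb
      simp [Ne.symm hb]
    · simp
  have hVU : U0ᵀ * U0 = (s : F) • (1 : Matrix (Fin k) (Fin k) F) := by
    ext a b
    simp only [Matrix.mul_apply, Matrix.transpose_apply, hU0, Matrix.of_apply,
      Matrix.smul_apply, Matrix.one_apply, smul_eq_mul]
    rcases eq_or_ne a b with rfl | hab
    · have h1 : ∀ i : Fin n, (if z i = a then (1:F) else 0) * (if z i = a then 1 else 0)
          = if z i = a then 1 else 0 := by
        intro i; split <;> simp
      rw [Finset.sum_congr rfl fun i _ => h1 i, Finset.sum_boole, hz a]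
      simp
    · rw [Finset.sum_eq_zero, if_neg hab, mul_zero]
      intro i _
      split_ifs with h1 h2
      · exact absurd (h1 ▸ h2) hab
      all_goals simp
  have hRow : ∀ i, (∑ j, Bz i j) = (s : F) := by
    intro i
    have h1 : (∑ j, Bz i j) = ∑ j, (if z j = z i then (1:F) else 0) :=
      Finset.sum_congr rfl fun j _ => by rw [hBz]; simp [eq_comm]
    rw [h1, Finset.sum_boole, hz (z i)]
  set Un : Matrix (Fin n) Unit F := Matrix.of fun _ _ => 1 with hUn
  set Vn : Matrix Unit (Fin n) F := Matrix.of fun _ _ => 1 with hVn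
  set A : Matrix (Fin n) (Fin n) F := α • 1 - (p - q) • Bz with hAdef
  have hAU : A * Un = c • Un := by
    ext i u
    have h1 : (A * Un) i u = ∑ j, (α * (if i = j then 1 else 0) - (p - q) * Bz i j) := by
      rw [Matrix.mul_apply]
      refine Finset.sum_congr rfl fun j _ => ?_
      simp [hAdef, hUn, Matrix.sub_apply, Matrix.smul_apply, Matrix.one_apply]
    rw [h1, Finset.sum_sub_distrib, ← Finset.mul_sum, ← Finset.mul_sum, hRow i]
    have h2 : (∑ j, if i = j then (1:F) else 0) = 1 := by simp
    rw [h2]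
    simp only [hUn, Matrix.of_apply, Matrix.smul_apply, smul_eq_mul, mul_one]
    rfl
  have hdetA : A.det = α ^ (n - k) * c ^ k := by
    have ht : α * (α⁻¹ * (p - q)) = p - q := by field_simp
    have hA : A = α • (1 + ((-(α⁻¹ * (p - q))) • U0) * U0ᵀ) := by
      rw [Matrix.smul_mul, smul_add, smul_smul, mul_neg, ht, neg_smul, ← sub_eq_add_neg,
        ← hBzdef, ← hAdef]
    have hdet1 : (1 : Matrix (Fin k) (Fin k) F) + U0ᵀ * ((-(α⁻¹ * (p - q))) • U0)
        = (1 + (-(α⁻¹ * (p - q))) * (s : F)) • 1 := by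
      rw [Matrix.mul_smul, hVU, smul_smul, add_smul, one_smul]
    rw [hA, Matrix.det_smul, Matrix.det_one_add_mul_comm, hdet1, Matrix.det_smul,
      Matrix.det_one, mul_one, Fintype.card_fin, Fintype.card_fin]
    have h3 : (1 + -(α⁻¹ * (p - q)) * (s : F)) = α⁻¹ * c := by
      rw [hcdef, ← hαdef, mul_sub α⁻¹ α, inv_mul_cancel₀ hα]; ring
    have h4 : α ^ n = α ^ (n - k) * α ^ k := by rw [← pow_add, Nat.sub_add_cancel hkn]
    have h5 : α ^ k * (α⁻¹) ^ k = 1 := by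
      rw [← mul_pow, mul_inv_cancel₀ hα, one_pow]
    rw [h3, mul_pow, h4]
    calc α ^ (n - k) * α ^ k * ((α⁻¹) ^ k * c ^ k)
        = α ^ (n - k) * c ^ k * (α ^ k * (α⁻¹) ^ k) := by ring
      _ = α ^ (n - k) * c ^ k := by rw [h5, mul_one]
  have hInter : A * (1 + (-(q * c⁻¹)) • Un * Vn) = A - q • (Un * Vn) := by
    rw [Matrix.mul_add, Matrix.mul_one, Matrix.smul_mul, Matrix.mul_smul, ← Matrix.mul_assoc,
      hAU, Matrix.smul_mul, smul_smul]
    have h6 : -(q * c⁻¹) * c = -q := by field_simp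
    rw [h6, neg_smul, ← sub_eq_add_neg]
  have hMat : (Matrix.of fun i j : Fin n => if i = j then x else if z i = z j then -p else -q)
      = A * (1 + (-(q * c⁻¹)) • Un * Vn) := by
    rw [hInter]
    ext i j
    have hUV : (Un * Vn) i j = 1 := by simp [hUn, hVn, Matrix.mul_apply]
    simp only [hAdef, Matrix.of_apply, Matrix.sub_apply, Matrix.smul_apply, smul_eq_mul,
      hUV, mul_one]
    rw [hBz]
    rcases eq_or_ne i j with rfl | hij
    · rw [Matrix.one_apply_eq, if_pos rfl, if_pos rfl, hαdef]
      ring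
    · rw [Matrix.one_apply_ne hij, if_neg hij]
      split_ifs <;> ring
  have hdet2 : (1 + (-(q * c⁻¹)) • Un * Vn).det = 1 - q * c⁻¹ * n := by
    rw [Matrix.det_one_add_mul_comm, Matrix.mul_smul]
    have hVU2 : Vn * Un = Matrix.of fun _ _ : Unit => (n : F) := by
      ext u v
      simp [hUn, hVn, Matrix.mul_apply]
    rw [hVU2, Matrix.det_unique]
    simp only [Matrix.add_apply, Matrix.smul_apply, Matrix.of_apply, Matrix.one_apply_eq,
      smul_eq_mul]
    ring
  rw [hMat, Matrix.det_mul, hdetA, hdet2]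
  have h1 : x - ((p - q) * (s : F) - p) = c := by rw [hcdef]; ring
  have h2 : x - (q * (n : F) + (p - q) * (s : F) - p) = c - q * n := by rw [hcdef]; ring
  rw [h2, h1]
  have hck : c ^ k = c ^ (k - 1) * c := by
    conv_lhs => rw [← Nat.sub_add_cancel hk1]
    rw [pow_succ]
  rw [hck]
  field_simp

/-- The expected adjacency matrix of the simplified CHIP model: zero diagonal,
`p` within communities, `q` across communities, with `k` communities of equal
size `s` (so `n = k·s`).  Its characteristic polynomial is
`(X − (qn + (p−q)s − p)) · (X − ((p−q)s − p))^(k−1) · (X + p)^(n−k)`,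
i.e. the eigenvalues are `qn + (p−q)s − p` (multiplicity 1),
`(p−q)s − p` (multiplicity `k−1`) and `−p` (multiplicity `n−k`). -/
theorem charpoly_expected_adjacency_zero_diag
    (n k s : ℕ) (hk : 2 ≤ k) (hs : 1 ≤ s) (hn : n = k * s)
    (z : Fin n → Fin k)
    (hz : ∀ a : Fin k, (Finset.univ.filter fun i => z i = a).card = s)
    (p q : ℝ) (M : Matrix (Fin n) (Fin n) ℝ)
    (hM : ∀ i j, M i j =
      if i = j then 0 else if z i = z j then p else q) :
    M.charpoly =
      (X - C (q * (n : ℝ) + (p - q) * (s : ℝ) - p)) *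
        (X - C ((p - q) * (s : ℝ) - p)) ^ (k - 1) *
        (X + C p) ^ (n - k) := by
  classical
  set K := FractionRing (Polynomial ℝ) with hK
  set φ : Polynomial ℝ →+* K := (algebraMap (Polynomial ℝ) K : Polynomial ℝ →+* K) with hφ
  have hφinj : Function.Injective φ := IsFractionRing.injective _ _
  apply hφinj
  rw [Matrix.charpoly, RingHom.map_det, RingHom.mapMatrix_apply]
  have hmap : (charmatrix M).map φ = Matrix.of fun i j : Fin n =>
      if i = j then φ X else if z i = z j then -(φ (C p)) else -(φ (C q)) := by
    ext i j
    rcases eq_or_ne i j with rfl | hij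
    · rw [Matrix.map_apply, charmatrix_apply_eq, hM i i, if_pos rfl]
      simp
    · rw [Matrix.map_apply, charmatrix_apply_ne _ _ _ hij, hM i j, if_neg hij,
        Matrix.of_apply, if_neg hij]
      split_ifs <;> simp
  have hC1 : (C ((p - q) * (s : ℝ) - p) : ℝ[X]) = (C p - C q) * (s : ℝ[X]) - C p := by
    simp [map_sub, _root_.map_mul]
  have hα : φ X + φ (C p) ≠ 0 := by
    rw [← map_add]
    intro h
    exact X_add_C_ne_zero p (hφinj (by rw [h, map_zero]))
  have hcval : φ X + φ (C p) - (φ (C p) - φ (C q)) * ((s : ℕ) : K)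
      = φ (X - C ((p - q) * (s : ℝ) - p)) := by
    rw [hC1]
    simp only [map_sub, _root_.map_mul, map_natCast]
    ring
  have hc : φ X + φ (C p) - (φ (C p) - φ (C q)) * ((s : ℕ) : K) ≠ 0 := by
    rw [hcval]
    intro h
    exact X_sub_C_ne_zero _ (hφinj (by rw [h, map_zero]))
  rw [hmap, chip_det_aux n k s hk hs hn z hz (φ X) (φ (C p)) (φ (C q)) hα hc]
  simp only [_root_.map_mul, map_pow, map_sub, map_add, map_natCast]
end

section
/- Let Z be an n×k real matrix each of whose rows is a standard basis vector of ℝ^k, and suppose each column a of Z has exactly n_a ≥ 1 ones. Let B be a k×k symmetric invertible real matrix and set P = Z B Zᵀ. Then P has rank k, and for any n×k real matrix U with orthonormal columns whose column space equals the column space of P, there exists a k×k real matrix Q with U = Z Q, and the rows of Q satisfy ‖Q_{a·} − Q_{b·}‖₂ = √(1/n_a + 1/n_b) for all a ≠ b. -/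
open Matrix

/-- Eigenvector-structure lemma for block matrices.  If `Z` is an `n × k`
membership matrix (each row a standard basis vector, each column `a` having
exactly `nsize a ≥ 1` ones), `B` is a `k × k` symmetric invertible matrix and
`P = Z B Zᵀ`, then `P` has rank `k`, and any `n × k` matrix `U` with
orthonormal columns spanning the column space of `P` can be written `U = Z Q`
where the rows of `Q` satisfy `‖Q_{a·} − Q_{b·}‖₂ = √(1/n_a + 1/n_b)` for
`a ≠ b`. -/
theorem spectral_embedding_membership_structure
    (n k : ℕ) (Z : Matrix (Fin n) (Fin k) ℝ)
    (hrow : ∀ i, ∃ a, ∀ b, Z i b = if b = a then 1 else 0)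
    (nsize : Fin k → ℕ) (hsize : ∀ a, 1 ≤ nsize a)
    (hcol : ∀ a, (Finset.univ.filter fun i => Z i a = 1).card = nsize a)
    (B : Matrix (Fin k) (Fin k) ℝ) (hB : B.IsSymm) (hBinv : IsUnit B)
    (P : Matrix (Fin n) (Fin n) ℝ) (hP : P = Z * B * Zᵀ) :
    P.rank = k ∧
      ∀ U : Matrix (Fin n) (Fin k) ℝ, Uᵀ * U = 1 →
        LinearMap.range (Matrix.toLin' U) = LinearMap.range (Matrix.toLin' P) →
        ∃ Q : Matrix (Fin k) (Fin k) ℝ, U = Z * Q ∧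
          ∀ a b, a ≠ b →
            Real.sqrt (∑ c, (Q a c - Q b c) ^ 2) =
              Real.sqrt (1 / (nsize a : ℝ) + 1 / (nsize b : ℝ)) := by
  classical
  set d : Fin k → ℝ := fun a => (nsize a : ℝ) with hd
  have hdpos : ∀ a, 0 < d a := fun a => by
    have := hsize a
    simp only [hd]
    exact_mod_cast Nat.lt_of_lt_of_le Nat.zero_lt_one this
  have hdne : ∀ a, d a ≠ 0 := fun a => (hdpos a).ne'
  -- Zᵀ Z = diagonal d
  have hZtZ : Zᵀ * Z = Matrix.diagonal d := by
    ext a b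
    simp only [Matrix.mul_apply, Matrix.transpose_apply, Matrix.diagonal_apply]
    by_cases hab : a = b
    · subst hab
      simp only [if_pos rfl]
      have h1 : ∀ i, Z i a * Z i a = if Z i a = 1 then (1 : ℝ) else 0 := by
        intro i
        obtain ⟨c, hc⟩ := hrow i
        rw [hc a]
        by_cases h : a = c <;> simp [h]
      calc ∑ i, Z i a * Z i a = ∑ i, if Z i a = 1 then (1 : ℝ) else 0 :=
            Finset.sum_congr rfl fun i _ => h1 i
        _ = ((Finset.univ.filter fun i => Z i a = 1).card : ℝ) := Finset.sum_boole _ _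
        _ = d a := by rw [hcol a]
    · simp only [if_neg hab]
      refine Finset.sum_eq_zero fun i _ => ?_
      obtain ⟨c, hc⟩ := hrow i
      rw [hc a, hc b]
      by_cases h : a = c
      · have : b ≠ c := fun h' => hab (h.trans h'.symm)
        simp [this]
      · simp [h]
  have hDunit : IsUnit (Matrix.diagonal d) := by
    rw [Matrix.isUnit_iff_isUnit_det, Matrix.det_diagonal]
    exact isUnit_iff_ne_zero.mpr (Finset.prod_ne_zero_iff.mpr fun a _ => hdne a)
  -- rank
  have hrank : P.rank = k := by
    have hupper : P.rank ≤ k := by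
      rw [hP]
      calc (Z * B * Zᵀ).rank ≤ (Z * B).rank := Matrix.rank_mul_le_left _ _
        _ ≤ Z.rank := Matrix.rank_mul_le_left _ _
        _ ≤ Fintype.card (Fin k) := Matrix.rank_le_card_width _
        _ = k := Fintype.card_fin k
    have hlower : k ≤ P.rank := by
      have heq : Zᵀ * (P * Z) = Matrix.diagonal d * B * Matrix.diagonal d := by
        rw [hP]
        calc Zᵀ * (Z * B * Zᵀ * Z) = (Zᵀ * Z) * B * (Zᵀ * Z) := by
              simp only [Matrix.mul_assoc]
          _ = Matrix.diagonal d * B * Matrix.diagonal d := by rw [hZtZ]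
      have hunit : IsUnit (Zᵀ * (P * Z)) := by
        rw [heq]
        exact (hDunit.mul hBinv).mul hDunit
      have h1 : (Zᵀ * (P * Z)).rank = k := by
        rw [Matrix.rank_of_isUnit _ hunit, Fintype.card_fin]
      calc k = (Zᵀ * (P * Z)).rank := h1.symm
        _ ≤ (P * Z).rank := Matrix.rank_mul_le_right _ _
        _ ≤ P.rank := Matrix.rank_mul_le_left _ _
    exact le_antisymm hupper hlower
  refine ⟨hrank, fun U hU hrange => ?_⟩
  set E : Matrix (Fin k) (Fin k) ℝ := Matrix.diagonal (fun a => (d a)⁻¹) with hE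
  have hED : E * Matrix.diagonal d = 1 := by
    rw [hE, Matrix.diagonal_mul_diagonal]
    convert Matrix.diagonal_one using 2
    ext a
    exact inv_mul_cancel₀ (hdne a)
  set Q : Matrix (Fin k) (Fin k) ℝ := E * Zᵀ * U with hQ
  -- U = Z * Q
  have hZQ : Z * Q = U := by
    have hproj : Z * E * Zᵀ * P = P := by
      rw [hP]
      calc Z * E * Zᵀ * (Z * B * Zᵀ) = Z * (E * (Zᵀ * Z)) * B * Zᵀ := by
              simp only [Matrix.mul_assoc]
        _ = Z * B * Zᵀ := by rw [hZtZ, hED, Matrix.mul_one]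
    apply Matrix.toLin'.injective
    apply LinearMap.ext
    intro v
    simp only [Matrix.toLin'_apply]
    have hmem : U *ᵥ v ∈ LinearMap.range (Matrix.toLin' P) := by
      rw [← hrange]
      exact ⟨v, by simp [Matrix.toLin'_apply]⟩
    obtain ⟨y, hy⟩ := hmem
    simp only [Matrix.toLin'_apply] at hy
    calc (Z * Q) *ᵥ v = (Z * E * Zᵀ * U) *ᵥ v := by
            rw [hQ]; simp only [Matrix.mul_assoc]
      _ = (Z * E * Zᵀ) *ᵥ (U *ᵥ v) := (Matrix.mulVec_mulVec v _ _).symm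
      _ = (Z * E * Zᵀ) *ᵥ (P *ᵥ y) := by rw [hy]
      _ = (Z * E * Zᵀ * P) *ᵥ y := Matrix.mulVec_mulVec y _ _
      _ = P *ᵥ y := by rw [hproj]
      _ = U *ᵥ v := hy
  -- Qᵀ D Q = 1
  have hQDQ : Qᵀ * Matrix.diagonal d * Q = 1 := by
    have : Uᵀ * U = Qᵀ * Matrix.diagonal d * Q := by
      rw [← hZQ, Matrix.transpose_mul, ← hZtZ]
      simp only [Matrix.mul_assoc]
    rw [← this, hU]
  -- Q is a unit
  have hQunit : IsUnit Q := by
    rw [Matrix.isUnit_iff_isUnit_det]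
    have hdet : Qᵀ.det * (Matrix.diagonal d).det * Q.det = 1 := by
      have := congrArg Matrix.det hQDQ
      simpa [Matrix.det_mul] using this
    exact IsUnit.of_mul_eq_one (Qᵀ.det * (Matrix.diagonal d).det)
      (by rw [← hdet]; ring)
  have hQTunit : IsUnit Qᵀ := by
    rw [Matrix.isUnit_iff_isUnit_det, Matrix.det_transpose]
    exact (Matrix.isUnit_iff_isUnit_det Q).mp hQunit
  set M : Matrix (Fin k) (Fin k) ℝ := Q * Qᵀ with hM
  have hMunit : IsUnit M := hQunit.mul hQTunit
  have hMDM : M * (Matrix.diagonal d * M) = M * 1 := by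
    have : Q * (Qᵀ * Matrix.diagonal d * Q) * Qᵀ = Q * 1 * Qᵀ := by rw [hQDQ]
    rw [hM]
    calc Q * Qᵀ * (Matrix.diagonal d * (Q * Qᵀ))
        = Q * (Qᵀ * Matrix.diagonal d * Q) * Qᵀ := by noncomm_ring
      _ = Q * 1 * Qᵀ := this
      _ = Q * Qᵀ * 1 := by noncomm_ring
  have hDM : Matrix.diagonal d * M = 1 := hMunit.mul_left_cancel hMDM
  have hMD : M * Matrix.diagonal d = 1 := mul_eq_one_comm.mpr hDM
  have hent : ∀ a b, M a b * d b = if a = b then (1 : ℝ) else 0 := by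
    intro a b
    have := congrFun (congrFun hMD a) b
    simpa [Matrix.mul_diagonal, Matrix.one_apply] using this
  have hMdiag : ∀ a, M a a = 1 / d a := fun a => by
    have := hent a a
    simp only [if_pos rfl] at this
    rw [eq_div_iff (hdne a)]
    exact this
  have hMoff : ∀ a b, a ≠ b → M a b = 0 := fun a b hab => by
    have := hent a b
    simp only [if_neg hab] at this
    exact (mul_eq_zero.mp this).resolve_right (hdne b)
  refine ⟨Q, hZQ.symm, fun a b hab => ?_⟩
  congr 1
  have hMab : ∀ a b, M a b = ∑ c, Q a c * Q b c := by
    intro a b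
    rw [hM]
    simp [Matrix.mul_apply, Matrix.transpose_apply]
  calc ∑ c, (Q a c - Q b c) ^ 2
      = (∑ c, Q a c * Q a c) + (∑ c, Q b c * Q b c) - 2 * ∑ c, Q a c * Q b c := by
        rw [← Finset.sum_add_distrib, Finset.mul_sum, ← Finset.sum_sub_distrib]
        exact Finset.sum_congr rfl fun c _ => by ring
    _ = M a a + M b b - 2 * M a b := by rw [hMab a a, hMab b b, hMab a b]
    _ = 1 / (nsize a : ℝ) + 1 / (nsize b : ℝ) := by
        rw [hMdiag a, hMdiag b, hMoff a b hab]; ring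
end
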